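/- The bivariate beta-Sarmanov kernel BS_{θ(x,H)} is an associated kernel: the random vector Z with density BS_{θ(x,H)} on [0,1]² satisfies E(Z) = x + a_θ(x,H) with a_{θj} = (1-2x_j)h_{jj}/(1+2h_{jj}), and Cov(Z) = B_θ(x,H) with diagonal entries b_{θjj} = σ̃_j²(x_j,h_{jj}) and off-diagonal entry b_{θ12} = (h_{12}/√(h_{11}h_{22})) σ̃₁(x₁,h₁₁) σ̃₂(x₂,h₂₂); both a_θ(x,H) and B_θ(x,H) tend to zero as H → 0. -/

import Mathlib

open MeasureTheory intervalIntegral Filter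

/-- Beta density on `[0,1]` reparametrized by target `x` and bandwidth `h`
(parameters `p = x/h + 1`, `q = (1-x)/h + 1`). -/
noncomputable def betaKern (x h t : ℝ) : ℝ :=
  t ^ (x / h) * (1 - t) ^ ((1 - x) / h)
    / (∫ s in (0:ℝ)..1, s ^ (x / h) * (1 - s) ^ ((1 - x) / h))

/-- Mean `μ̃(x,h)` of the beta kernel. -/
noncomputable def betaMean (x h : ℝ) : ℝ := (x + h) / (1 + 2 * h)

/-- Variance `σ̃²(x,h)` of the beta kernel. -/
noncomputable def betaVar (x h : ℝ) : ℝ :=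
  h * (x + h) * (1 + h - x) / ((1 + 2 * h) ^ 2 * (1 + 3 * h))

/-- The bivariate beta-Sarmanov kernel `BS_{θ(x,H)}` with correlation parameter
`ρ = h₁₂/√(h₁₁h₂₂)`. -/
noncomputable def betaSarmanov (x1 x2 h11 h22 h12 v1 v2 : ℝ) : ℝ :=
  betaKern x1 h11 v1 * betaKern x2 h22 v2 *
    (1 + (h12 / Real.sqrt (h11 * h22))
        * ((v1 - betaMean x1 h11) / Real.sqrt (betaVar x1 h11))
        * ((v2 - betaMean x2 h22) / Real.sqrt (betaVar x2 h22)))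

namespace BSAux

lemma cont_rpow_const {c : ℝ} (hc : 0 ≤ c) : Continuous fun t : ℝ => t ^ c :=
  continuous_iff_continuousAt.2 fun x => Real.continuousAt_rpow_const x c (Or.inr hc)

lemma cont_core {a b : ℝ} (ha : 0 ≤ a) (hb : 0 ≤ b) :
    Continuous fun t : ℝ => t ^ a * (1 - t) ^ b :=
  (cont_rpow_const ha).mul ((cont_rpow_const hb).comp (continuous_const.sub continuous_id))

noncomputable def I (a b : ℝ) : ℝ := ∫ s in (0:ℝ)..1, s ^ a * (1 - s) ^ b

lemma intble {a b : ℝ} (ha : 0 ≤ a) (hb : 0 ≤ b) :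
    IntervalIntegrable (fun t : ℝ => t ^ a * (1 - t) ^ b) volume 0 1 :=
  (cont_core ha hb).intervalIntegrable _ _

lemma I_pos {a b : ℝ} (ha : 0 ≤ a) (hb : 0 ≤ b) : 0 < I a b := by
  apply intervalIntegral.intervalIntegral_pos_of_pos_on (intble ha hb)
  · intro t ht
    exact mul_pos (Real.rpow_pos_of_pos ht.1 _)
      (Real.rpow_pos_of_pos (by linarith [ht.2]) _)
  · norm_num

lemma rpow_succ {t : ℝ} (ht : 0 ≤ t) {c : ℝ} (hc : 0 ≤ c) : t ^ (c + 1) = t ^ c * t :=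
  Real.rpow_add_one' ht (by linarith)

lemma I_split {a b : ℝ} (ha : 0 ≤ a) (hb : 0 ≤ b) : I a b = I (a + 1) b + I a (b + 1) := by
  have hcong : ∀ t ∈ Set.uIcc (0:ℝ) 1,
      t ^ a * (1 - t) ^ b = t ^ (a + 1) * (1 - t) ^ b + t ^ a * (1 - t) ^ (b + 1) := by
    intro t ht
    rw [Set.uIcc_of_le (by norm_num : (0:ℝ) ≤ 1)] at ht
    rw [rpow_succ ht.1 ha, rpow_succ (by linarith [ht.2] : (0:ℝ) ≤ 1 - t) hb]
    ring
  unfold I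
  rw [intervalIntegral.integral_congr hcong,
    intervalIntegral.integral_add (intble (by linarith) hb) (intble ha (by linarith))]

lemma I_parts {a b : ℝ} (ha : 0 ≤ a) (hb : 0 ≤ b) :
    (a + 1) * I a (b + 1) = (b + 1) * I (a + 1) b := by
  have key : ∀ t ∈ Set.uIcc (0:ℝ) 1,
      HasDerivAt (fun s : ℝ => s ^ (a + 1) * (1 - s) ^ (b + 1))
        ((a + 1) * (t ^ a * (1 - t) ^ (b + 1)) - (b + 1) * (t ^ (a + 1) * (1 - t) ^ b)) t := by
    intro t _
    have h1 : HasDerivAt (fun s : ℝ => s ^ (a + 1)) ((a + 1) * t ^ a) t := by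
      have := Real.hasDerivAt_rpow_const (x := t) (p := a + 1) (Or.inr (by linarith))
      simpa using this
    have h2 : HasDerivAt (fun s : ℝ => (1 - s) ^ (b + 1)) (-((b + 1) * (1 - t) ^ b)) t := by
      have houter := Real.hasDerivAt_rpow_const (x := 1 - t) (p := b + 1) (Or.inr (by linarith))
      have hinner : HasDerivAt (fun s : ℝ => 1 - s) (-1) t :=
        (hasDerivAt_const t (1:ℝ)).sub (hasDerivAt_id t) |>.congr_deriv (by norm_num)
      have := (houter.comp t hinner)
      simpa [Function.comp_def] using this
    have : HasDerivAt (fun s : ℝ => s ^ (a + 1) * (1 - s) ^ (b + 1))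
        ((a + 1) * t ^ a * (1 - t) ^ (b + 1) + t ^ (a + 1) * -((b + 1) * (1 - t) ^ b)) t := h1.mul h2
    convert this using 1
    ring
  have hInt : IntervalIntegrable
      (fun t : ℝ => (a + 1) * (t ^ a * (1 - t) ^ (b + 1)) - (b + 1) * (t ^ (a + 1) * (1 - t) ^ b))
      volume 0 1 :=
    ((continuous_const.mul (cont_core ha (by linarith))).sub
      (continuous_const.mul (cont_core (by linarith) hb))).intervalIntegrable _ _
  have h0 := intervalIntegral.integral_eq_sub_of_hasDerivAt key hInt
  rw [intervalIntegral.integral_sub ((intble ha (by linarith)).const_mul _)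
      ((intble (by linarith) hb).const_mul _),
    intervalIntegral.integral_const_mul, intervalIntegral.integral_const_mul] at h0
  have hr : (fun s : ℝ => s ^ (a + 1) * (1 - s) ^ (b + 1)) 1
      - (fun s : ℝ => s ^ (a + 1) * (1 - s) ^ (b + 1)) 0 = 0 := by
    simp [Real.zero_rpow (show a + 1 ≠ 0 by linarith), Real.zero_rpow (show b + 1 ≠ 0 by linarith)]
  rw [hr] at h0
  have : (a + 1) * I a (b + 1) - (b + 1) * I (a + 1) b = 0 := h0
  linarith

lemma I_step {a b : ℝ} (ha : 0 ≤ a) (hb : 0 ≤ b) :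
    I (a + 1) b = (a + 1) / (a + b + 2) * I a b := by
  have hs := I_split ha hb
  have hp := I_parts ha hb
  have hsub : I a (b + 1) = I a b - I (a + 1) b := by linarith
  rw [hsub] at hp
  have hd : (0:ℝ) < a + b + 2 := by linarith
  rw [div_mul_eq_mul_div, eq_div_iff hd.ne']
  nlinarith [hp]



section moments

variable {x h : ℝ}

lemma ha' (hx : x ∈ Set.Icc (0:ℝ) 1) (hh : 0 < h) : 0 ≤ x / h := div_nonneg hx.1 hh.le

lemma hb' (hx : x ∈ Set.Icc (0:ℝ) 1) (hh : 0 < h) : 0 ≤ (1 - x) / h :=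
  div_nonneg (by linarith [hx.2]) hh.le

lemma betaKern_eq (x h t : ℝ) :
    betaKern x h t = t ^ (x / h) * (1 - t) ^ ((1 - x) / h) / I (x / h) ((1 - x) / h) := rfl

lemma betaKern_cont (hx : x ∈ Set.Icc (0:ℝ) 1) (hh : 0 < h) :
    Continuous (betaKern x h) := by
  have : betaKern x h = fun t : ℝ =>
      t ^ (x / h) * (1 - t) ^ ((1 - x) / h) / I (x / h) ((1 - x) / h) := rfl
  rw [this]
  exact (cont_core (ha' hx hh) (hb' hx hh)).div_const _

lemma B0 (hx : x ∈ Set.Icc (0:ℝ) 1) (hh : 0 < h) :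
    (∫ t in (0:ℝ)..1, betaKern x h t) = 1 := by
  simp only [betaKern_eq]
  rw [intervalIntegral.integral_div]
  exact div_self (I_pos (ha' hx hh) (hb' hx hh)).ne'

lemma B1 (hx : x ∈ Set.Icc (0:ℝ) 1) (hh : 0 < h) :
    (∫ t in (0:ℝ)..1, t * betaKern x h t) = betaMean x h := by
  have ha := ha' hx hh; have hb := hb' hx hh
  have hN := I_pos ha hb
  have hrw : (fun t : ℝ => t * betaKern x h t)
      = fun t : ℝ => t * (t ^ (x / h) * (1 - t) ^ ((1 - x) / h)) / I (x / h) ((1 - x) / h) := by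
    funext t; rw [betaKern_eq]; ring
  rw [hrw, intervalIntegral.integral_div]
  have hcong : ∀ t ∈ Set.uIcc (0:ℝ) 1,
      t * (t ^ (x / h) * (1 - t) ^ ((1 - x) / h))
        = t ^ (x / h + 1) * (1 - t) ^ ((1 - x) / h) := by
    intro t ht
    rw [Set.uIcc_of_le (by norm_num : (0:ℝ) ≤ 1)] at ht
    rw [rpow_succ ht.1 ha]; ring
  rw [intervalIntegral.integral_congr hcong]
  have : (∫ t in (0:ℝ)..1, t ^ (x / h + 1) * (1 - t) ^ ((1 - x) / h))
      = I (x / h + 1) ((1 - x) / h) := rfl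
  rw [this, I_step ha hb, mul_div_assoc, div_self hN.ne', mul_one]
  unfold betaMean
  have h1 : (0:ℝ) < 1 + 2 * h := by linarith
  field_simp
  rw [show x + (1 - x) + h * 2 = 1 + h * 2 by ring, mul_div_assoc, div_self (by linarith), mul_one]

lemma B2 (hx : x ∈ Set.Icc (0:ℝ) 1) (hh : 0 < h) :
    (∫ t in (0:ℝ)..1, t ^ 2 * betaKern x h t)
      = (x / h + 2) / (x / h + (1 - x) / h + 3) * ((x / h + 1) / (x / h + (1 - x) / h + 2)) := by
  have ha := ha' hx hh; have hb := hb' hx hh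
  have hN := I_pos ha hb
  have hrw : (fun t : ℝ => t ^ 2 * betaKern x h t)
      = fun t : ℝ => t ^ 2 * (t ^ (x / h) * (1 - t) ^ ((1 - x) / h)) / I (x / h) ((1 - x) / h) := by
    funext t; rw [betaKern_eq]; ring
  rw [hrw, intervalIntegral.integral_div]
  have hcong : ∀ t ∈ Set.uIcc (0:ℝ) 1,
      t ^ 2 * (t ^ (x / h) * (1 - t) ^ ((1 - x) / h))
        = t ^ (x / h + 1 + 1) * (1 - t) ^ ((1 - x) / h) := by
    intro t ht
    rw [Set.uIcc_of_le (by norm_num : (0:ℝ) ≤ 1)] at ht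
    rw [rpow_succ ht.1 (by linarith), rpow_succ ht.1 ha]; ring
  rw [intervalIntegral.integral_congr hcong]
  have : (∫ t in (0:ℝ)..1, t ^ (x / h + 1 + 1) * (1 - t) ^ ((1 - x) / h))
      = I (x / h + 1 + 1) ((1 - x) / h) := rfl
  rw [this, I_step (by linarith) hb, I_step ha hb]
  rw [show x / h + 1 + (1 - x) / h + 2 = x / h + (1 - x) / h + 3 by ring,
    show x / h + 1 + 1 = x / h + 2 by ring]
  have hgen : ∀ A B : ℝ, A * (B * I (x / h) ((1 - x) / h)) / I (x / h) ((1 - x) / h) = A * B := by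
    intro A B; field_simp
  exact hgen _ _

lemma Bc1 (hx : x ∈ Set.Icc (0:ℝ) 1) (hh : 0 < h) :
    (∫ t in (0:ℝ)..1, (t - betaMean x h) * betaKern x h t) = 0 := by
  have hc := betaKern_cont hx hh
  have hrw : (fun t : ℝ => (t - betaMean x h) * betaKern x h t)
      = fun t : ℝ => t * betaKern x h t - betaMean x h * betaKern x h t := by
    funext t; ring
  have i1 : IntervalIntegrable (fun t : ℝ => t * betaKern x h t) volume 0 1 :=
    (continuous_id.mul hc).intervalIntegrable _ _
  have i2 : IntervalIntegrable (fun t : ℝ => betaMean x h * betaKern x h t) volume 0 1 :=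
    (continuous_const.mul hc).intervalIntegrable _ _
  rw [hrw, intervalIntegral.integral_sub i1 i2,
    intervalIntegral.integral_const_mul, B0 hx hh, B1 hx hh, mul_one, sub_self]

lemma Bc2 (hx : x ∈ Set.Icc (0:ℝ) 1) (hh : 0 < h) :
    (∫ t in (0:ℝ)..1, (t - betaMean x h) ^ 2 * betaKern x h t) = betaVar x h := by
  have hc := betaKern_cont hx hh
  have hrw : (fun t : ℝ => (t - betaMean x h) ^ 2 * betaKern x h t)
      = fun t : ℝ => t ^ 2 * betaKern x h t
          - (2 * betaMean x h) * (t * betaKern x h t)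
          + betaMean x h ^ 2 * betaKern x h t := by
    funext t; ring
  have i1 : IntervalIntegrable (fun t : ℝ => t ^ 2 * betaKern x h t) volume 0 1 :=
    ((continuous_pow 2).mul hc).intervalIntegrable _ _
  have i2 : IntervalIntegrable (fun t : ℝ => 2 * betaMean x h * (t * betaKern x h t)) volume 0 1 :=
    (continuous_const.mul (continuous_id.mul hc)).intervalIntegrable _ _
  have i3 : IntervalIntegrable (fun t : ℝ => betaMean x h ^ 2 * betaKern x h t) volume 0 1 :=
    (continuous_const.mul hc).intervalIntegrable _ _
  rw [hrw, intervalIntegral.integral_add (i1.sub i2) i3,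
    intervalIntegral.integral_sub i1 i2,
    intervalIntegral.integral_const_mul, intervalIntegral.integral_const_mul,
    B0 hx hh, B1 hx hh, B2 hx hh, mul_one]
  unfold betaMean betaVar
  have h1 : (0:ℝ) < 1 + 2 * h := by linarith
  have h2 : (0:ℝ) < 1 + 3 * h := by linarith
  have hne := hh.ne'
  rw [show x / h + (1 - x) / h + 3 = (1 + 3 * h) / h by field_simp; ring,
    show x / h + (1 - x) / h + 2 = (1 + 2 * h) / h by field_simp; ring]
  field_simp
  ring

lemma betaVar_pos (hx : x ∈ Set.Icc (0:ℝ) 1) (hh : 0 < h) : 0 < betaVar x h := by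
  unfold betaVar
  have h1 : (0:ℝ) < 1 + 2 * h := by linarith
  have h2 : (0:ℝ) < 1 + 3 * h := by linarith
  have h3 : 0 < x + h := by linarith [hx.1]
  have h4 : 0 < 1 + h - x := by linarith [hx.2]
  positivity

end moments

lemma master (x1 x2 h11 h22 h12 : ℝ)
    (hx1 : x1 ∈ Set.Icc (0:ℝ) 1) (hx2 : x2 ∈ Set.Icc (0:ℝ) 1)
    (hh11 : 0 < h11) (hh22 : 0 < h22)
    (g1 g2 : ℝ → ℝ) (hg1 : Continuous g1) (hg2 : Continuous g2) :
    (∫ v1 in (0:ℝ)..1, ∫ v2 in (0:ℝ)..1,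
        g1 v1 * g2 v2 * betaSarmanov x1 x2 h11 h22 h12 v1 v2)
      = (∫ v1 in (0:ℝ)..1, g1 v1 * betaKern x1 h11 v1)
          * (∫ v2 in (0:ℝ)..1, g2 v2 * betaKern x2 h22 v2)
        + (h12 / Real.sqrt (h11 * h22))
            / (Real.sqrt (betaVar x1 h11) * Real.sqrt (betaVar x2 h22))
          * ((∫ v1 in (0:ℝ)..1, g1 v1 * (v1 - betaMean x1 h11) * betaKern x1 h11 v1)
            * (∫ v2 in (0:ℝ)..1, g2 v2 * (v2 - betaMean x2 h22) * betaKern x2 h22 v2)) := by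
  have hK1 := betaKern_cont hx1 hh11
  have hK2 := betaKern_cont hx2 hh22
  have hs1 : (0:ℝ) < Real.sqrt (betaVar x1 h11) := Real.sqrt_pos.2 (betaVar_pos hx1 hh11)
  have hs2 : (0:ℝ) < Real.sqrt (betaVar x2 h22) := Real.sqrt_pos.2 (betaVar_pos hx2 hh22)
  set μ1 := betaMean x1 h11
  set μ2 := betaMean x2 h22
  set σ1 := Real.sqrt (betaVar x1 h11)
  set σ2 := Real.sqrt (betaVar x2 h22)
  set ρ := h12 / Real.sqrt (h11 * h22) with hρ
  set c := ρ / (σ1 * σ2) with hc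
  have pt : ∀ v1 v2 : ℝ, g1 v1 * g2 v2 * betaSarmanov x1 x2 h11 h22 h12 v1 v2
      = (g1 v1 * betaKern x1 h11 v1) * (g2 v2 * betaKern x2 h22 v2)
        + (g1 v1 * (v1 - μ1) * betaKern x1 h11 v1)
          * ((g2 v2 * (v2 - μ2) * betaKern x2 h22 v2) * c) := by
    intro v1 v2
    unfold betaSarmanov
    rw [show Real.sqrt (betaVar x1 h11) = σ1 from rfl, show Real.sqrt (betaVar x2 h22) = σ2 from rfl,
      show betaMean x1 h11 = μ1 from rfl, show betaMean x2 h22 = μ2 from rfl]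
    rw [hc, hρ]
    field_simp
  simp only [pt]
  have hi2a : IntervalIntegrable (fun v2 : ℝ => g2 v2 * betaKern x2 h22 v2) volume 0 1 :=
    (hg2.mul hK2).intervalIntegrable _ _
  have hi2b : IntervalIntegrable
      (fun v2 : ℝ => g2 v2 * (v2 - μ2) * betaKern x2 h22 v2) volume 0 1 :=
    (((hg2.mul (continuous_id.sub continuous_const)).mul hK2)).intervalIntegrable _ _
  have hi1a : IntervalIntegrable
      (fun v1 : ℝ => g1 v1 * betaKern x1 h11 v1
        * (∫ v2 in (0:ℝ)..1, g2 v2 * betaKern x2 h22 v2)) volume 0 1 :=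
    (((hg1.mul hK1)).mul continuous_const).intervalIntegrable _ _
  have hi1b : IntervalIntegrable
      (fun v1 : ℝ => g1 v1 * (v1 - μ1) * betaKern x1 h11 v1
        * ((∫ v2 in (0:ℝ)..1, g2 v2 * (v2 - μ2) * betaKern x2 h22 v2) * c)) volume 0 1 :=
    ((((hg1.mul (continuous_id.sub continuous_const)).mul hK1)).mul continuous_const).intervalIntegrable _ _
  have inner_eq : ∀ v1 : ℝ,
      (∫ v2 in (0:ℝ)..1, (g1 v1 * betaKern x1 h11 v1) * (g2 v2 * betaKern x2 h22 v2)
        + (g1 v1 * (v1 - μ1) * betaKern x1 h11 v1)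
          * ((g2 v2 * (v2 - μ2) * betaKern x2 h22 v2) * c))
      = (g1 v1 * betaKern x1 h11 v1) * (∫ v2 in (0:ℝ)..1, g2 v2 * betaKern x2 h22 v2)
        + (g1 v1 * (v1 - μ1) * betaKern x1 h11 v1)
          * ((∫ v2 in (0:ℝ)..1, g2 v2 * (v2 - μ2) * betaKern x2 h22 v2) * c) := by
    intro v1
    rw [intervalIntegral.integral_add (hi2a.const_mul _) ((hi2b.mul_const _).const_mul _),
      intervalIntegral.integral_const_mul, intervalIntegral.integral_const_mul,
      intervalIntegral.integral_mul_const]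
  simp only [inner_eq]
  rw [intervalIntegral.integral_add hi1a hi1b,
    intervalIntegral.integral_mul_const, intervalIntegral.integral_mul_const]
  rw [hc]
  ring

lemma tendsto_lin (x : ℝ) :
    Tendsto (fun h : ℝ => (1 - 2 * x) * h / (1 + 2 * h))
      (nhdsWithin 0 (Set.Ioi 0)) (nhds 0) := by
  have hc : ContinuousAt (fun h : ℝ => (1 - 2 * x) * h / (1 + 2 * h)) 0 := by
    apply ContinuousAt.div (by fun_prop) (by fun_prop)
    norm_num
  have := hc.tendsto.mono_left (nhdsWithin_le_nhds (s := Set.Ioi (0:ℝ)))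
  simpa using this

lemma contAt_betaVar (x : ℝ) : ContinuousAt (fun h : ℝ => betaVar x h) 0 := by
  unfold betaVar
  apply ContinuousAt.div (by fun_prop) (by fun_prop)
  norm_num

lemma tendsto_betaVar (x : ℝ) :
    Tendsto (fun h : ℝ => betaVar x h) (nhdsWithin 0 (Set.Ioi 0)) (nhds 0) := by
  have := (contAt_betaVar x).tendsto.mono_left (nhdsWithin_le_nhds (s := Set.Ioi (0:ℝ)))
  simpa [betaVar] using this

lemma tendsto_offdiag (x1 x2 : ℝ) :
    Tendsto
      (fun p : ℝ × ℝ × ℝ =>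
        (p.2.2 / Real.sqrt (p.1 * p.2.1))
          * Real.sqrt (betaVar x1 p.1) * Real.sqrt (betaVar x2 p.2.1))
      (nhdsWithin (0, 0, 0)
        {p : ℝ × ℝ × ℝ | 0 < p.1 ∧ 0 < p.2.1 ∧ p.2.2 ^ 2 < p.1 * p.2.1})
      (nhds 0) := by
  apply squeeze_zero_norm'
    (a := fun p : ℝ × ℝ × ℝ => Real.sqrt (betaVar x1 p.1) * Real.sqrt (betaVar x2 p.2.1))
  · filter_upwards [self_mem_nhdsWithin] with p hp
    obtain ⟨h1, h2, h3⟩ := hp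
    have hsq : (0:ℝ) < Real.sqrt (p.1 * p.2.1) := Real.sqrt_pos.2 (mul_pos h1 h2)
    have hratio : |p.2.2 / Real.sqrt (p.1 * p.2.1)| ≤ 1 := by
      rw [abs_div, abs_of_pos hsq, div_le_one hsq]
      exact Real.abs_le_sqrt h3.le
    calc ‖p.2.2 / Real.sqrt (p.1 * p.2.1) * Real.sqrt (betaVar x1 p.1)
          * Real.sqrt (betaVar x2 p.2.1)‖
        = |p.2.2 / Real.sqrt (p.1 * p.2.1)| * Real.sqrt (betaVar x1 p.1)
          * Real.sqrt (betaVar x2 p.2.1) := by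
          rw [Real.norm_eq_abs, abs_mul, abs_mul,
            abs_of_nonneg (Real.sqrt_nonneg _), abs_of_nonneg (Real.sqrt_nonneg _)]
      _ ≤ 1 * Real.sqrt (betaVar x1 p.1) * Real.sqrt (betaVar x2 p.2.1) := by
          gcongr
      _ = Real.sqrt (betaVar x1 p.1) * Real.sqrt (betaVar x2 p.2.1) := by ring
  · have t1 : Tendsto (fun p : ℝ × ℝ × ℝ => p.1) (nhds ((0:ℝ), (0:ℝ), (0:ℝ))) (nhds 0) :=
      continuousAt_fst
    have t2 : Tendsto (fun p : ℝ × ℝ × ℝ => p.2.1) (nhds ((0:ℝ), (0:ℝ), (0:ℝ))) (nhds 0) :=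
      (continuous_fst.comp continuous_snd).continuousAt
    have u1 : Tendsto (fun p : ℝ × ℝ × ℝ => Real.sqrt (betaVar x1 p.1))
        (nhds ((0:ℝ), (0:ℝ), (0:ℝ))) (nhds (Real.sqrt (betaVar x1 0))) := by
      have := Filter.Tendsto.comp (Real.continuous_sqrt.tendsto (betaVar x1 0))
        (Filter.Tendsto.comp (contAt_betaVar x1) t1)
      simpa [Function.comp_def] using this
    have u2 : Tendsto (fun p : ℝ × ℝ × ℝ => Real.sqrt (betaVar x2 p.2.1))
        (nhds ((0:ℝ), (0:ℝ), (0:ℝ))) (nhds (Real.sqrt (betaVar x2 0))) := by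
      have := Filter.Tendsto.comp (Real.continuous_sqrt.tendsto (betaVar x2 0))
        (Filter.Tendsto.comp (contAt_betaVar x2) t2)
      simpa [Function.comp_def] using this
    have := (u1.mul u2).mono_left
      (nhdsWithin_le_nhds (s := {p : ℝ × ℝ × ℝ | 0 < p.1 ∧ 0 < p.2.1 ∧ p.2.2 ^ 2 < p.1 * p.2.1}))
    simpa [betaVar] using this

end BSAux


open BSAux

/-- The beta-Sarmanov kernel is an associated kernel: its mean vector is
`x + a_θ(x,H)` with `a_{θj} = (1-2x_j)h_{jj}/(1+2h_{jj})`, its covariance matrix has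
diagonal entries `σ̃_j²` and off-diagonal entry `(h₁₂/√(h₁₁h₂₂)) σ̃₁ σ̃₂`; and all these
quantities tend to `0` as `H → 0` (within the admissible set). -/
theorem betaSarmanov_associated_kernel
    (x1 x2 h11 h22 h12 : ℝ)
    (hx1 : x1 ∈ Set.Icc (0:ℝ) 1) (hx2 : x2 ∈ Set.Icc (0:ℝ) 1)
    (hh11 : 0 < h11) (hh22 : 0 < h22) (hh12 : h12 ^ 2 < h11 * h22)
    (hpos : ∀ v1 ∈ Set.Icc (0:ℝ) 1, ∀ v2 ∈ Set.Icc (0:ℝ) 1,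
      0 ≤ betaSarmanov x1 x2 h11 h22 h12 v1 v2) :
    (∫ v1 in (0:ℝ)..1, ∫ v2 in (0:ℝ)..1, v1 * betaSarmanov x1 x2 h11 h22 h12 v1 v2)
      = x1 + (1 - 2 * x1) * h11 / (1 + 2 * h11) ∧
    (∫ v1 in (0:ℝ)..1, ∫ v2 in (0:ℝ)..1, v2 * betaSarmanov x1 x2 h11 h22 h12 v1 v2)
      = x2 + (1 - 2 * x2) * h22 / (1 + 2 * h22) ∧
    (∫ v1 in (0:ℝ)..1, ∫ v2 in (0:ℝ)..1,
        (v1 - betaMean x1 h11) ^ 2 * betaSarmanov x1 x2 h11 h22 h12 v1 v2)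
      = betaVar x1 h11 ∧
    (∫ v1 in (0:ℝ)..1, ∫ v2 in (0:ℝ)..1,
        (v2 - betaMean x2 h22) ^ 2 * betaSarmanov x1 x2 h11 h22 h12 v1 v2)
      = betaVar x2 h22 ∧
    (∫ v1 in (0:ℝ)..1, ∫ v2 in (0:ℝ)..1,
        (v1 - betaMean x1 h11) * (v2 - betaMean x2 h22)
          * betaSarmanov x1 x2 h11 h22 h12 v1 v2)
      = (h12 / Real.sqrt (h11 * h22))
          * Real.sqrt (betaVar x1 h11) * Real.sqrt (betaVar x2 h22) ∧
    Tendsto (fun h : ℝ => (1 - 2 * x1) * h / (1 + 2 * h))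
      (nhdsWithin 0 (Set.Ioi 0)) (nhds 0) ∧
    Tendsto (fun h : ℝ => (1 - 2 * x2) * h / (1 + 2 * h))
      (nhdsWithin 0 (Set.Ioi 0)) (nhds 0) ∧
    Tendsto (fun h : ℝ => betaVar x1 h) (nhdsWithin 0 (Set.Ioi 0)) (nhds 0) ∧
    Tendsto (fun h : ℝ => betaVar x2 h) (nhdsWithin 0 (Set.Ioi 0)) (nhds 0) ∧
    Tendsto
      (fun p : ℝ × ℝ × ℝ =>
        (p.2.2 / Real.sqrt (p.1 * p.2.1))
          * Real.sqrt (betaVar x1 p.1) * Real.sqrt (betaVar x2 p.2.1))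
      (nhdsWithin (0, 0, 0)
        {p : ℝ × ℝ × ℝ | 0 < p.1 ∧ 0 < p.2.1 ∧ p.2.2 ^ 2 < p.1 * p.2.1})
      (nhds 0) := by
  have hv1 := betaVar_pos hx1 hh11
  have hv2 := betaVar_pos hx2 hh22
  have hs1 : (0:ℝ) < Real.sqrt (betaVar x1 h11) := Real.sqrt_pos.2 hv1
  have hs2 : (0:ℝ) < Real.sqrt (betaVar x2 h22) := Real.sqrt_pos.2 hv2
  refine ⟨?_, ?_, ?_, ?_, ?_, tendsto_lin x1, tendsto_lin x2,
    tendsto_betaVar x1, tendsto_betaVar x2, tendsto_offdiag x1 x2⟩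
  · have h := master x1 x2 h11 h22 h12 hx1 hx2 hh11 hh22
      (fun v => v) (fun _ => (1:ℝ)) continuous_id continuous_const
    simp only [mul_one, one_mul] at h
    rw [h, B0 hx2 hh22, B1 hx1 hh11, Bc1 hx2 hh22, mul_zero, mul_zero, add_zero, mul_one]
    unfold betaMean
    field_simp
    ring
  · have h := master x1 x2 h11 h22 h12 hx1 hx2 hh11 hh22
      (fun _ => (1:ℝ)) (fun v => v) continuous_const continuous_id
    simp only [mul_one, one_mul] at h
    rw [h, B0 hx1 hh11, B1 hx2 hh22, Bc1 hx1 hh11, zero_mul, mul_zero, add_zero, one_mul]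
    unfold betaMean
    field_simp
    ring
  · have h := master x1 x2 h11 h22 h12 hx1 hx2 hh11 hh22
      (fun v => (v - betaMean x1 h11) ^ 2) (fun _ => (1:ℝ))
      (by fun_prop) continuous_const
    simp only [mul_one, one_mul] at h
    rw [h, B0 hx2 hh22, Bc2 hx1 hh11, Bc1 hx2 hh22, mul_zero, mul_zero, add_zero, mul_one]
  · have h := master x1 x2 h11 h22 h12 hx1 hx2 hh11 hh22
      (fun _ => (1:ℝ)) (fun v => (v - betaMean x2 h22) ^ 2)
      continuous_const (by fun_prop)
    simp only [mul_one, one_mul] at h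
    rw [h, B0 hx1 hh11, Bc2 hx2 hh22, Bc1 hx1 hh11, zero_mul, mul_zero, add_zero, one_mul]
  · have h := master x1 x2 h11 h22 h12 hx1 hx2 hh11 hh22
      (fun v => v - betaMean x1 h11) (fun v => v - betaMean x2 h22)
      (by fun_prop) (by fun_prop)
    have e1 : (∫ v1 in (0:ℝ)..1, (v1 - betaMean x1 h11) * (v1 - betaMean x1 h11)
        * betaKern x1 h11 v1) = betaVar x1 h11 := by
      rw [← Bc2 hx1 hh11]
      congr 1; funext t; ring
    have e2 : (∫ v2 in (0:ℝ)..1, (v2 - betaMean x2 h22) * (v2 - betaMean x2 h22)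
        * betaKern x2 h22 v2) = betaVar x2 h22 := by
      rw [← Bc2 hx2 hh22]
      congr 1; funext t; ring
    rw [h, Bc1 hx1 hh11, Bc1 hx2 hh22, zero_mul, e1, e2, zero_add]
    have r1 : Real.sqrt (betaVar x1 h11) ^ 2 = betaVar x1 h11 := Real.sq_sqrt hv1.le
    have r2 : Real.sqrt (betaVar x2 h22) ^ 2 = betaVar x2 h22 := Real.sq_sqrt hv2.le
    set s1 := Real.sqrt (betaVar x1 h11)
    set s2 := Real.sqrt (betaVar x2 h22)
    rw [← r1, ← r2]
    field_simp
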